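/- Let X and Y be independent, identically distributed nonnegative random variables with P(X > v) = 1/(1 + v) for every v ≥ 0. Then E[max(1, min(X, Y))] = 3/2. (This is the expected second-highest value among the four bids 1, 1, X, Y, i.e., the revenue of the Vickrey auction in Hartline–Roughgarden's lower-bound example with both bidders duplicated, compared to an optimal revenue approaching 2.) -/

import Mathlib

open MeasureTheory ProbabilityTheory Set

lemma aux_deriv (t : ℝ) (ht : t ∈ Ici (1:ℝ)) :
    HasDerivAt (fun x : ℝ => -(1 + x)⁻¹) (1 / (1 + t)^2) t := by
  have h1 : (1:ℝ) + t ≠ 0 := by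
    have : (1:ℝ) ≤ t := ht
    positivity
  have := (((hasDerivAt_id t).const_add 1).inv h1).neg
  refine this.congr_deriv ?_
  simp only [id]
  ring

lemma aux_integral : ∫ t in Ioi (1:ℝ), 1 / (1 + t)^2 = 1/2 := by
  have htend : Filter.Tendsto (fun x : ℝ => -(1 + x)⁻¹) Filter.atTop (nhds 0) := by
    have h1 : Filter.Tendsto (fun x : ℝ => 1 + x) Filter.atTop Filter.atTop :=
      Filter.tendsto_atTop_add_const_left _ 1 Filter.tendsto_id
    have := (tendsto_inv_atTop_zero.comp h1).neg
    simpa using this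
  have := integral_Ioi_of_hasDerivAt_of_nonneg' aux_deriv
    (fun x hx => by positivity) htend
  rw [this]
  norm_num

lemma aux_integrable : IntegrableOn (fun t : ℝ => 1 / (1 + t)^2) (Ioi 1) := by
  exact integrableOn_Ioi_deriv_of_nonneg' aux_deriv (fun x hx => by positivity)
    (by
      have h1 : Filter.Tendsto (fun x : ℝ => 1 + x) Filter.atTop Filter.atTop :=
        Filter.tendsto_atTop_add_const_left _ 1 Filter.tendsto_id
      have := (tendsto_inv_atTop_zero.comp h1).neg
      simpa using this)

/-- **Hartline–Roughgarden lower-bound example, both bidders duplicated.**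
If `X, Y` are i.i.d. with `P(X > v) = 1/(1+v)` for `v ≥ 0`, then the expected
second-highest value among the four bids `1, 1, X, Y`, namely
`E[max(1, min(X,Y))]`, equals `3/2`. -/
theorem stmt_15 {Ω : Type*} [MeasurableSpace Ω] (μ : Measure Ω) [IsProbabilityMeasure μ]
    (X Y : Ω → ℝ) (hX : Measurable X) (hY : Measurable Y)
    (hXnn : ∀ ω, 0 ≤ X ω) (hYnn : ∀ ω, 0 ≤ Y ω)
    (hindep : IndepFun X Y μ)
    (hXtail : ∀ v : ℝ, 0 ≤ v → (μ {ω | v < X ω}).toReal = 1 / (1 + v))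
    (hYtail : ∀ v : ℝ, 0 ≤ v → (μ {ω | v < Y ω}).toReal = 1 / (1 + v)) :
    ∫ ω, max 1 (min (X ω) (Y ω)) ∂μ = 3/2 := by
  set f : Ω → ℝ := fun ω => max 1 (min (X ω) (Y ω)) with hf
  have hfm : Measurable f := measurable_const.max (hX.min hY)
  have hfnn : ∀ ω, 0 ≤ f ω := fun ω => le_trans zero_le_one (le_max_left _ _)
  -- tail of f
  have htail : ∀ t : ℝ, t ∈ Ici (1:ℝ) →
      μ {a | t < f a} = ENNReal.ofReal (1 / (1 + t)^2) := by
    intro t ht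
    have ht1 : (1:ℝ) ≤ t := ht
    have ht0 : (0:ℝ) ≤ t := le_trans zero_le_one ht1
    have hset : {a | t < f a} = X ⁻¹' (Ioi t) ∩ Y ⁻¹' (Ioi t) := by
      ext a
      simp only [hf, Set.mem_setOf_eq, Set.mem_inter_iff, Set.mem_preimage, Set.mem_Ioi,
        lt_max_iff, lt_min_iff]
      constructor
      · rintro (h | ⟨h1, h2⟩)
        · linarith
        · exact ⟨h1, h2⟩
      · intro h; exact Or.inr h
    have hXm : μ (X ⁻¹' (Ioi t)) = ENNReal.ofReal (1 / (1 + t)) := by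
      rw [← ENNReal.ofReal_toReal (measure_ne_top μ (X ⁻¹' (Ioi t)))]
      congr 1
      exact hXtail t ht0
    have hYm : μ (Y ⁻¹' (Ioi t)) = ENNReal.ofReal (1 / (1 + t)) := by
      rw [← ENNReal.ofReal_toReal (measure_ne_top μ (Y ⁻¹' (Ioi t)))]
      congr 1
      exact hYtail t ht0
    rw [hset, hindep.measure_inter_preimage_eq_mul _ _ measurableSet_Ioi measurableSet_Ioi,
      hXm, hYm, ← ENNReal.ofReal_mul (by positivity)]
    congr 1
    field_simp
  -- layer cake
  have key := lintegral_eq_lintegral_meas_lt μ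
    (Filter.Eventually.of_forall hfnn) hfm.aemeasurable
  have hsplit : (Ioo (0:ℝ) 1) ∪ Ici 1 = Ioi 0 := Ioo_union_Ici_eq_Ioi zero_lt_one
  have hdisj : Disjoint (Ioo (0:ℝ) 1) (Ici 1) := by
    rw [Set.disjoint_left]; intro x hx hx'
    exact absurd hx.2 (not_lt.mpr hx')
  have hI1 : ∫⁻ t in Ioo (0:ℝ) 1, μ {a | t < f a} = 1 := by
    have h : ∀ t ∈ Ioo (0:ℝ) 1, μ {a | t < f a} = 1 := by
      intro t ht
      have : {a | t < f a} = Set.univ := by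
        ext a
        simp only [Set.mem_setOf_eq, Set.mem_univ, iff_true]
        exact lt_of_lt_of_le ht.2 (le_max_left _ _)
      rw [this, measure_univ]
    rw [setLIntegral_congr_fun measurableSet_Ioo h]
    simp [Real.volume_Ioo]
  have hI2 : ∫⁻ t in Ici (1:ℝ), μ {a | t < f a} = ENNReal.ofReal (1/2) := by
    rw [setLIntegral_congr Ioi_ae_eq_Ici.symm,
      setLIntegral_congr_fun measurableSet_Ioi
        (fun t ht => htail t (le_of_lt ht)),
      ← ofReal_integral_eq_lintegral_ofReal aux_integrable
        (Filter.Eventually.of_forall (fun t => by positivity)),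
      aux_integral]
  have hlint : ∫⁻ ω, ENNReal.ofReal (f ω) ∂μ = ENNReal.ofReal (3/2) := by
    rw [key, ← hsplit, lintegral_union measurableSet_Ici hdisj, hI1, hI2]
    rw [← ENNReal.ofReal_one, ← ENNReal.ofReal_add (by norm_num) (by norm_num)]
    norm_num
  rw [integral_eq_lintegral_of_nonneg_ae (Filter.Eventually.of_forall hfnn)
    hfm.aestronglyMeasurable, hlint, ENNReal.toReal_ofReal (by norm_num)]
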